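/- arXiv:2012.10630 — 5 statements merged into one kernel-verified Lean document; each statement's English description precedes it below -/
import Mathlib

section
/- Let V be a finite ground set, and for each i in a finite index set I and each j in V let g_{ij} ≥ 0, and let C_i > 0. Then the set function G(S) = Σ_{i∈I} -log(1 + C_i · exp(-α Σ_{j∈S} g_{ij})) (for α > 0) is a monotone (non-decreasing) submodular function on subsets of V. -/
open Finset Real

lemma glister_key (c t a b : ℝ) (hc : 0 < c) (ht : 0 < t) (ht1 : t ≤ 1)
    (hb : 0 < b) (hba : b ≤ a) :
    (-Real.log (1 + c * (t * a))) - (-Real.log (1 + c * a)) ≥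
      (-Real.log (1 + c * (t * b))) - (-Real.log (1 + c * b)) := by
  have ha : 0 < a := lt_of_lt_of_le hb hba
  have h1 : (0:ℝ) < 1 + c * a := by positivity
  have h2 : (0:ℝ) < 1 + c * (t * a) := by positivity
  have h3 : (0:ℝ) < 1 + c * b := by positivity
  have h4 : (0:ℝ) < 1 + c * (t * b) := by positivity
  have hmul : (1 + c * (t * a)) * (1 + c * b) ≤ (1 + c * (t * b)) * (1 + c * a) := by
    nlinarith [mul_nonneg (mul_nonneg hc.le (sub_nonneg.mpr ht1)) (sub_nonneg.mpr hba)]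
  have hlog : Real.log ((1 + c * (t * a)) * (1 + c * b)) ≤
      Real.log ((1 + c * (t * b)) * (1 + c * a)) :=
    Real.log_le_log (by positivity) hmul
  rw [Real.log_mul h2.ne' h3.ne', Real.log_mul h4.ne' h1.ne'] at hlog
  linarith

theorem glister_logistic_monotone_submodular
    {V I : Type*} [Fintype V] [DecidableEq V] [Fintype I]
    (g : I → V → ℝ) (hg : ∀ i j, 0 ≤ g i j)
    (C : I → ℝ) (hC : ∀ i, 0 < C i) (α : ℝ) (hα : 0 < α)
    (G : Finset V → ℝ)
    (hG : ∀ S, G S = ∑ i, -Real.log (1 + C i * Real.exp (-α * ∑ j ∈ S, g i j))) :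
    (∀ S T : Finset V, S ⊆ T → G S ≤ G T) ∧
    (∀ (S T : Finset V) (e : V), S ⊆ T → e ∉ T →
      G (insert e S) - G S ≥ G (insert e T) - G T) := by
  constructor
  · intro S T hST
    rw [hG S, hG T]
    apply Finset.sum_le_sum
    intro i _
    have hxy : ∑ j ∈ S, g i j ≤ ∑ j ∈ T, g i j :=
      Finset.sum_le_sum_of_subset_of_nonneg hST (fun j _ _ => hg i j)
    have hexp : Real.exp (-α * ∑ j ∈ T, g i j) ≤ Real.exp (-α * ∑ j ∈ S, g i j) := by
      apply Real.exp_le_exp.mpr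
      nlinarith
    have h1 : (0:ℝ) < 1 + C i * Real.exp (-α * ∑ j ∈ T, g i j) := by have := hC i; positivity
    have h2 : 1 + C i * Real.exp (-α * ∑ j ∈ T, g i j) ≤
        1 + C i * Real.exp (-α * ∑ j ∈ S, g i j) := by nlinarith [hC i]
    have := Real.log_le_log h1 h2
    linarith
  · intro S T e hST heT
    have heS : e ∉ S := fun h => heT (hST h)
    rw [hG (insert e S), hG S, hG (insert e T), hG T, ← Finset.sum_sub_distrib,
      ← Finset.sum_sub_distrib]
    apply Finset.sum_le_sum
    intro i _
    rw [Finset.sum_insert heS, Finset.sum_insert heT]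
    have hxy : ∑ j ∈ S, g i j ≤ ∑ j ∈ T, g i j :=
      Finset.sum_le_sum_of_subset_of_nonneg hST (fun j _ _ => hg i j)
    have hrw : ∀ x : ℝ, Real.exp (-α * (g i e + x)) =
        Real.exp (-α * g i e) * Real.exp (-α * x) := by
      intro x
      rw [← Real.exp_add]
      ring_nf
    rw [hrw, hrw]
    have ht : 0 < Real.exp (-α * g i e) := Real.exp_pos _
    have ht1 : Real.exp (-α * g i e) ≤ 1 := by
      apply Real.exp_le_one_iff.mpr
      nlinarith [hg i e]
    have hb : 0 < Real.exp (-α * ∑ j ∈ T, g i j) := Real.exp_pos _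
    have hba : Real.exp (-α * ∑ j ∈ T, g i j) ≤ Real.exp (-α * ∑ j ∈ S, g i j) := by
      apply Real.exp_le_exp.mpr; nlinarith
    exact glister_key (C i) _ _ _ (hC i) ht ht1 hb hba
end

section
/- For each i in a finite index set I and j in a finite ground set V, let ĝ_{ij} ≥ 0 and C_i ∈ ℝ. Then the set function G(S) = Σ_{i∈I} min(0, C_i + Σ_{j∈S} ĝ_{ij}) is monotone non-decreasing and submodular on 2^V. -/
open Finset

theorem glister_hinge_monotone_submodular
    {V I : Type*} [DecidableEq V] [Fintype I]
    (ghat : I → V → ℝ) (hg : ∀ i j, 0 ≤ ghat i j) (C : I → ℝ)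
    (G : Finset V → ℝ)
    (hG : ∀ S, G S = ∑ i, min 0 (C i + ∑ j ∈ S, ghat i j)) :
    (∀ S T : Finset V, S ⊆ T → G S ≤ G T) ∧
    (∀ (S T : Finset V) (e : V), S ⊆ T → e ∉ T →
      G (insert e S) - G S ≥ G (insert e T) - G T) := by
  constructor
  · intro S T hST
    rw [hG, hG]
    apply Finset.sum_le_sum
    intro i _
    have : ∑ j ∈ S, ghat i j ≤ ∑ j ∈ T, ghat i j :=
      Finset.sum_le_sum_of_subset_of_nonneg hST (fun j _ _ => hg i j)
    simp only [min_def]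
    split_ifs <;> linarith
  · intro S T e hST heT
    have heS : e ∉ S := fun h => heT (hST h)
    rw [hG, hG, hG, hG, ← Finset.sum_sub_distrib, ← Finset.sum_sub_distrib]
    apply Finset.sum_le_sum
    intro i _
    rw [Finset.sum_insert heS, Finset.sum_insert heT]
    have hsum : ∑ j ∈ S, ghat i j ≤ ∑ j ∈ T, ghat i j :=
      Finset.sum_le_sum_of_subset_of_nonneg hST (fun j _ _ => hg i j)
    have he := hg i e
    simp only [min_def]
    split_ifs <;> linarith
end

section
/- Let I be a finite index set, let C_{ik} > 0 for i∈I, k in a finite set K, let g'_{ijk} satisfy 1 ≤ g'_{ijk} ≤ 2R² + 1 for all i,j,k and some R > 0, and let α > 0. Define G2(S) = -Σ_{i∈I} log(Σ_{k∈K} C_{ik} exp(-α Σ_{j∈S} g'_{ijk})). Then for every element e and every set X, the marginal gain satisfies |I|·α·1 ≤ G2(e|X) ≤ |I|·α·(2R²+1); consequently G2 is β-submodular with β = 1/(2R²+1). -/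
open Finset Real

theorem glister_cross_entropy_beta_submodular
    {V I K : Type*} [DecidableEq V] [Fintype I] [Fintype K] [Nonempty K]
    (C : I → K → ℝ) (hC : ∀ i k, 0 < C i k)
    (g' : I → V → K → ℝ) (R : ℝ) (hR : 0 < R)
    (hg1 : ∀ i j k, 1 ≤ g' i j k) (hg2 : ∀ i j k, g' i j k ≤ 2 * R ^ 2 + 1)
    (α : ℝ) (hα : 0 < α)
    (G2 : Finset V → ℝ)
    (hG2 : ∀ S, G2 S =
      -∑ i, Real.log (∑ k, C i k * Real.exp (-α * ∑ j ∈ S, g' i j k))) :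
    (∀ (X : Finset V) (e : V), e ∉ X →
      (Fintype.card I : ℝ) * α * 1 ≤ G2 (insert e X) - G2 X ∧
      G2 (insert e X) - G2 X ≤ (Fintype.card I : ℝ) * α * (2 * R ^ 2 + 1)) ∧
    (∀ (X Y : Finset V) (e : V), X ⊆ Y → e ∉ Y →
      G2 (insert e X) - G2 X ≥ (1 / (2 * R ^ 2 + 1)) * (G2 (insert e Y) - G2 Y)) := by
  set M : ℝ := 2 * R ^ 2 + 1 with hM
  have hM1 : 1 < M := by nlinarith
  have hMpos : 0 < M := by linarith
  have key : ∀ (X : Finset V) (e : V), e ∉ X →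
      (Fintype.card I : ℝ) * α ≤ G2 (insert e X) - G2 X ∧
      G2 (insert e X) - G2 X ≤ (Fintype.card I : ℝ) * α * M := by
    intro X e heX
    set A : I → ℝ := fun i => ∑ k, C i k * Real.exp (-α * ∑ j ∈ X, g' i j k) with hA
    set B : I → ℝ := fun i => ∑ k, C i k * Real.exp (-α * ∑ j ∈ insert e X, g' i j k) with hB
    have hApos : ∀ i, 0 < A i := fun i =>
      Finset.sum_pos (fun k _ => mul_pos (hC i k) (Real.exp_pos _)) univ_nonempty
    have hBpos : ∀ i, 0 < B i := fun i =>
      Finset.sum_pos (fun k _ => mul_pos (hC i k) (Real.exp_pos _)) univ_nonempty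
    have hBle : ∀ i, B i ≤ Real.exp (-α) * A i := by
      intro i
      rw [hB, hA, Finset.mul_sum]
      refine Finset.sum_le_sum fun k _ => ?_
      rw [Finset.sum_insert heX]
      have : Real.exp (-α * (g' i e k + ∑ j ∈ X, g' i j k)) ≤
          Real.exp (-α) * Real.exp (-α * ∑ j ∈ X, g' i j k) := by
        rw [← Real.exp_add]
        apply Real.exp_le_exp.mpr
        nlinarith [hg1 i e k]
      nlinarith [(hC i k).le, Real.exp_pos (-α * ∑ j ∈ X, g' i j k)]
    have hBge : ∀ i, Real.exp (-α * M) * A i ≤ B i := by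
      intro i
      rw [hB, hA, Finset.mul_sum]
      refine Finset.sum_le_sum fun k _ => ?_
      rw [Finset.sum_insert heX]
      have : Real.exp (-α * M) * Real.exp (-α * ∑ j ∈ X, g' i j k) ≤
          Real.exp (-α * (g' i e k + ∑ j ∈ X, g' i j k)) := by
        rw [← Real.exp_add]
        apply Real.exp_le_exp.mpr
        nlinarith [hg2 i e k]
      nlinarith [(hC i k).le, Real.exp_pos (-α * ∑ j ∈ X, g' i j k)]
    have hlog : ∀ i, α ≤ Real.log (A i) - Real.log (B i) ∧
        Real.log (A i) - Real.log (B i) ≤ α * M := by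
      intro i
      constructor
      · have h1 : Real.log (B i) ≤ Real.log (Real.exp (-α) * A i) :=
          Real.log_le_log (hBpos i) (hBle i)
        rw [Real.log_mul (Real.exp_ne_zero _) (hApos i).ne', Real.log_exp] at h1
        linarith
      · have h1 : Real.log (Real.exp (-α * M) * A i) ≤ Real.log (B i) :=
          Real.log_le_log (mul_pos (Real.exp_pos _) (hApos i)) (hBge i)
        rw [Real.log_mul (Real.exp_ne_zero _) (hApos i).ne', Real.log_exp] at h1
        linarith
    have hdiff : G2 (insert e X) - G2 X = ∑ i, (Real.log (A i) - Real.log (B i)) := by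
      rw [hG2, hG2, Finset.sum_sub_distrib]
      ring
    rw [hdiff]
    constructor
    · calc (Fintype.card I : ℝ) * α = ∑ _i : I, α := by
            rw [Finset.sum_const, card_univ, nsmul_eq_mul]
        _ ≤ ∑ i, (Real.log (A i) - Real.log (B i)) :=
            Finset.sum_le_sum fun i _ => (hlog i).1
    · calc ∑ i, (Real.log (A i) - Real.log (B i)) ≤ ∑ _i : I, α * M :=
            Finset.sum_le_sum fun i _ => (hlog i).2
        _ = (Fintype.card I : ℝ) * α * M := by
            rw [Finset.sum_const, card_univ, nsmul_eq_mul]; ring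
  constructor
  · intro X e heX
    obtain ⟨h1, h2⟩ := key X e heX
    exact ⟨by linarith, h2⟩
  · intro X Y e hXY heY
    obtain ⟨h1, _⟩ := key X e (fun h => heY (hXY h))
    obtain ⟨_, h4⟩ := key Y e heY
    have hcard : (0 : ℝ) ≤ (Fintype.card I : ℝ) := Nat.cast_nonneg _
    rw [ge_iff_le, div_mul_eq_mul_div, one_mul, div_le_iff₀ hMpos]
    nlinarith
end

section
/- Let f be a β-submodular monotone set function on a finite ground set V (f(e|X) ≥ β f(e|Y) ≥ 0 for all X ⊆ Y, e ∉ Y) with f(∅) = 0. Then the greedy algorithm that iteratively adds the element with largest marginal gain, run for k steps, returns a set S_k with f(S_k) ≥ (1 - e^{-β})·max_{|S| ≤ k} f(S). -/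
open Finset Real

private lemma union_mono_aux {V : Type*} [DecidableEq V]
    (f : Finset V → ℝ)
    (hmono : ∀ (X : Finset V) (e : V), e ∉ X → 0 ≤ f (insert e X) - f X)
    (B T : Finset V) : f B ≤ f (B ∪ T) := by
  induction T using Finset.induction_on with
  | empty => simp
  | @insert a T' ha ih =>
    by_cases h : a ∈ B ∪ T'
    · rw [Finset.union_insert, Finset.insert_eq_self.mpr h]; exact ih
    · rw [Finset.union_insert]
      have := hmono (B ∪ T') a h
      linarith

private lemma beta_sum_aux {V : Type*} [DecidableEq V]
    (f : Finset V → ℝ) (β : ℝ)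
    (hbeta : ∀ (X Y : Finset V) (e : V), X ⊆ Y → e ∉ Y →
      f (insert e X) - f X ≥ β * (f (insert e Y) - f Y))
    (B T : Finset V) :
    β * (f (B ∪ T) - f B) ≤ ∑ a ∈ T, (f (insert a B) - f B) := by
  induction T using Finset.induction_on with
  | empty => simp
  | @insert a T' ha ih =>
    rw [Finset.sum_insert ha]
    by_cases h : a ∈ B ∪ T'
    · rw [Finset.union_insert, Finset.insert_eq_self.mpr h]
      have ha' : a ∈ B := by
        rcases Finset.mem_union.mp h with h' | h'
        · exact h'
        · exact absurd h' ha
      rw [Finset.insert_eq_self.mpr ha']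
      linarith
    · rw [Finset.union_insert]
      have := hbeta B (B ∪ T') a Finset.subset_union_left h
      nlinarith [ih]

theorem greedy_beta_submodular_guarantee
    {V : Type*} [Fintype V] [DecidableEq V] [Nonempty V]
    (f : Finset V → ℝ) (β : ℝ) (hβ0 : 0 < β) (hβ1 : β ≤ 1)
    (hempty : f ∅ = 0)
    (hmono : ∀ (X : Finset V) (e : V), e ∉ X → 0 ≤ f (insert e X) - f X)
    (hbeta : ∀ (X Y : Finset V) (e : V), X ⊆ Y → e ∉ Y →
      f (insert e X) - f X ≥ β * (f (insert e Y) - f Y))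
    (S : ℕ → Finset V) (e : ℕ → V)
    (hS0 : S 0 = ∅)
    (hSstep : ∀ t, S (t + 1) = insert (e t) (S t))
    (hgreedy : ∀ t (x : V), f (insert x (S t)) - f (S t) ≤
      f (insert (e t) (S t)) - f (S t))
    (k : ℕ) (Sstar : Finset V) (hcard : Sstar.card ≤ k) :
    f (S k) ≥ (1 - Real.exp (-β)) * f Sstar := by
  have hstar_nonneg : 0 ≤ f Sstar := by
    have := union_mono_aux f hmono ∅ Sstar
    simpa [hempty] using this
  rcases Nat.eq_zero_or_pos k with hk0 | hkpos
  · subst hk0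
    have : Sstar = ∅ := Finset.card_eq_zero.mp (Nat.le_zero.mp hcard)
    subst this
    simp [hS0, hempty]
  have hgain_nonneg : ∀ t, 0 ≤ f (S (t+1)) - f (S t) := by
    intro t
    obtain ⟨x⟩ := ‹Nonempty V›
    by_cases hx : x ∈ S t
    · have := hgreedy t x
      rw [Finset.insert_eq_self.mpr hx] at this
      rw [hSstep t]; linarith
    · have h1 := hmono (S t) x hx
      have h2 := hgreedy t x
      rw [hSstep t]; linarith
  have hkR : (0:ℝ) < k := by exact_mod_cast hkpos
  have hcoef : 0 ≤ 1 - β / k := by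
    have : β / k ≤ 1 := by
      rw [div_le_one hkR]
      calc β ≤ 1 := hβ1
        _ ≤ (k:ℝ) := by exact_mod_cast hkpos
    linarith
  have hstep : ∀ t, f Sstar - f (S (t+1)) ≤ (1 - β / k) * (f Sstar - f (S t)) := by
    intro t
    have h1 : f Sstar ≤ f (S t ∪ Sstar) := by
      have := union_mono_aux f hmono Sstar (S t)
      rwa [Finset.union_comm] at this
    have h2 := beta_sum_aux f β hbeta (S t) Sstar
    have h3 : ∑ a ∈ Sstar, (f (insert a (S t)) - f (S t)) ≤
        (Sstar.card : ℝ) * (f (S (t+1)) - f (S t)) := by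
      have := Finset.sum_le_card_nsmul Sstar (fun a => f (insert a (S t)) - f (S t))
        (f (S (t+1)) - f (S t)) (by
          intro x _
          simpa [hSstep t] using hgreedy t x)
      simpa [nsmul_eq_mul] using this
    have h4 : (Sstar.card : ℝ) * (f (S (t+1)) - f (S t)) ≤
        (k : ℝ) * (f (S (t+1)) - f (S t)) := by
      have hc : (Sstar.card : ℝ) ≤ (k : ℝ) := by exact_mod_cast hcard
      exact mul_le_mul_of_nonneg_right hc (hgain_nonneg t)
    -- β * (f Sstar - f (S t)) ≤ k * gain
    have h5 : β * (f Sstar - f (S t)) ≤ (k:ℝ) * (f (S (t+1)) - f (S t)) := by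
      have := mul_le_mul_of_nonneg_left (sub_le_sub_right h1 (f (S t))) hβ0.le
      linarith
    have hdiv : β / k * (f Sstar - f (S t)) ≤ f (S (t+1)) - f (S t) := by
      rw [div_mul_eq_mul_div, div_le_iff₀ hkR]
      nlinarith
    nlinarith
  have hiter : ∀ t, f Sstar - f (S t) ≤ (1 - β / k) ^ t * f Sstar := by
    intro t
    induction t with
    | zero => simp [hS0, hempty]
    | succ n ih =>
      calc f Sstar - f (S (n+1)) ≤ (1 - β / k) * (f Sstar - f (S n)) := hstep n
        _ ≤ (1 - β / k) * ((1 - β / k) ^ n * f Sstar) :=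
            mul_le_mul_of_nonneg_left ih hcoef
        _ = (1 - β / k) ^ (n+1) * f Sstar := by ring
  have hexp : (1 - β / k) ^ k ≤ Real.exp (-β) := by
    have h1 : 1 - β / k ≤ Real.exp (-(β / k)) := by
      have := Real.add_one_le_exp (-(β/k))
      linarith
    calc (1 - β / k) ^ k ≤ (Real.exp (-(β/k))) ^ k :=
          pow_le_pow_left₀ hcoef h1 k
      _ = Real.exp (-β) := by
          rw [← Real.exp_nat_mul]
          congr 1
          field_simp
  have := hiter k
  have h6 : (1 - β / k) ^ k * f Sstar ≤ Real.exp (-β) * f Sstar :=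
    mul_le_mul_of_nonneg_right hexp hstar_nonneg
  nlinarith
end

section
/- Let f: 2^V → ℝ be monotone submodular with f(∅) = 0 on a finite ground set V. For the greedy iterates S_0 = ∅, S_{t+1} = S_t ∪ {argmax_e f(e|S_t)}, and any set S* with |S*| ≤ k, the per-step recursion f(S_{t+1}) - f(S_t) ≥ (1/k)(f(S*) - f(S_t)) holds, and consequently f(S_k) ≥ (1 - (1 - 1/k)^k) f(S*) ≥ (1 - 1/e) f(S*). -/
open Finset Real

lemma greedy_aux_sub {V : Type*} [DecidableEq V]
    (f : Finset V → ℝ)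
    (hsub : ∀ (X Y : Finset V) (e : V), X ⊆ Y → e ∉ Y →
      f (insert e X) - f X ≥ f (insert e Y) - f Y)
    (A : Finset V) (B : Finset V) :
    f (A ∪ B) - f A ≤ ∑ x ∈ B, (f (insert x A) - f A) := by
  induction B using Finset.induction_on with
  | empty => simp
  | @insert b B hb ih =>
    rw [Finset.union_insert, Finset.sum_insert hb]
    by_cases hbA : b ∈ A
    · have h1 : insert b (A ∪ B) = A ∪ B := Finset.insert_eq_self.2 (by simp [hbA])
      have h2 : insert b A = A := Finset.insert_eq_self.2 hbA
      rw [h1, h2]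
      linarith
    · have hbAB : b ∉ A ∪ B := by simp [hbA, hb]
      have := hsub A (A ∪ B) b Finset.subset_union_left hbAB
      linarith

theorem greedy_classical_guarantee
    {V : Type*} [Fintype V] [DecidableEq V] [Nonempty V]
    (f : Finset V → ℝ)
    (hempty : f ∅ = 0)
    (hmono : ∀ S T : Finset V, S ⊆ T → f S ≤ f T)
    (hsub : ∀ (X Y : Finset V) (e : V), X ⊆ Y → e ∉ Y →
      f (insert e X) - f X ≥ f (insert e Y) - f Y)
    (S : ℕ → Finset V) (e : ℕ → V)
    (hS0 : S 0 = ∅)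
    (hSstep : ∀ t, S (t + 1) = insert (e t) (S t))
    (hgreedy : ∀ t (x : V), f (insert x (S t)) - f (S t) ≤
      f (insert (e t) (S t)) - f (S t))
    (k : ℕ) (hk : 0 < k) (Sstar : Finset V) (hcard : Sstar.card ≤ k) :
    (∀ t, f (S (t + 1)) - f (S t) ≥ (1 / (k : ℝ)) * (f Sstar - f (S t))) ∧
    f (S k) ≥ (1 - (1 - 1 / (k : ℝ)) ^ k) * f Sstar ∧
    f (S k) ≥ (1 - 1 / Real.exp 1) * f Sstar := by
  have hk' : (0 : ℝ) < (k : ℝ) := by exact_mod_cast hk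
  have hk1 : (1 : ℝ) ≤ (k : ℝ) := by exact_mod_cast hk
  have hq0 : (0 : ℝ) ≤ 1 - 1 / (k : ℝ) := by
    have : 1 / (k : ℝ) ≤ 1 := by
      rw [div_le_one hk']; exact hk1
    linarith
  have hfs0 : 0 ≤ f Sstar := by
    have := hmono ∅ Sstar (Finset.empty_subset _)
    linarith [hempty ▸ this]
  -- per-step bound
  have step : ∀ t, f (S (t + 1)) - f (S t) ≥ (1 / (k : ℝ)) * (f Sstar - f (S t)) := by
    intro t
    set g : ℝ := f (S (t + 1)) - f (S t) with hg
    have hgain : ∀ x : V, f (insert x (S t)) - f (S t) ≤ g := by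
      intro x
      rw [hg, hSstep t]
      exact hgreedy t x
    have hgnn : 0 ≤ g := by
      rw [hg, hSstep t]
      have := hmono (S t) (insert (e t) (S t)) (Finset.subset_insert _ _)
      linarith
    have h1 : f (S t ∪ Sstar) - f (S t) ≤ ∑ x ∈ Sstar, (f (insert x (S t)) - f (S t)) :=
      greedy_aux_sub f hsub (S t) Sstar
    have h2 : ∑ x ∈ Sstar, (f (insert x (S t)) - f (S t)) ≤ (Sstar.card : ℝ) * g := by
      calc ∑ x ∈ Sstar, (f (insert x (S t)) - f (S t)) ≤ ∑ _x ∈ Sstar, g :=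
            Finset.sum_le_sum (fun x _ => hgain x)
        _ = (Sstar.card : ℝ) * g := by rw [Finset.sum_const, nsmul_eq_mul]
    have h3 : (Sstar.card : ℝ) * g ≤ (k : ℝ) * g := by
      apply mul_le_mul_of_nonneg_right _ hgnn
      exact_mod_cast hcard
    have h4 : f Sstar ≤ f (S t ∪ Sstar) := hmono _ _ Finset.subset_union_right
    have h5 : f Sstar - f (S t) ≤ (k : ℝ) * g := by linarith
    have h6 : (1 / (k : ℝ)) * (f Sstar - f (S t)) ≤ (1 / (k : ℝ)) * ((k : ℝ) * g) :=
      mul_le_mul_of_nonneg_left h5 (by positivity)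
    have h7 : (1 / (k : ℝ)) * ((k : ℝ) * g) = g := by field_simp
    linarith
  -- geometric decay
  have decay : ∀ t, f Sstar - f (S t) ≤ (1 - 1 / (k : ℝ)) ^ t * f Sstar := by
    intro t
    induction t with
    | zero => simp [hS0, hempty]
    | succ t ih =>
      have h := step t
      have : f Sstar - f (S (t + 1)) ≤ (1 - 1 / (k : ℝ)) * (f Sstar - f (S t)) := by
        have hinv : (1 / (k : ℝ)) * (f Sstar - f (S t)) ≤ f (S (t + 1)) - f (S t) := h
        ring_nf
        ring_nf at hinv
        linarith
      calc f Sstar - f (S (t + 1)) ≤ (1 - 1 / (k : ℝ)) * (f Sstar - f (S t)) := this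
        _ ≤ (1 - 1 / (k : ℝ)) * ((1 - 1 / (k : ℝ)) ^ t * f Sstar) :=
            mul_le_mul_of_nonneg_left ih hq0
        _ = (1 - 1 / (k : ℝ)) ^ (t + 1) * f Sstar := by ring
  have part2 : f (S k) ≥ (1 - (1 - 1 / (k : ℝ)) ^ k) * f Sstar := by
    have := decay k
    nlinarith
  refine ⟨step, part2, ?_⟩
  -- (1 - 1/k)^k ≤ 1/e
  have hexp : (1 - 1 / (k : ℝ)) ^ k ≤ 1 / Real.exp 1 := by
    have h1 : 1 - 1 / (k : ℝ) ≤ Real.exp (-(1 / (k : ℝ))) := by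
      have := Real.add_one_le_exp (-(1 / (k : ℝ)))
      linarith
    calc (1 - 1 / (k : ℝ)) ^ k ≤ (Real.exp (-(1 / (k : ℝ)))) ^ k :=
          pow_le_pow_left₀ hq0 h1 k
      _ = Real.exp ((k : ℝ) * (-(1 / (k : ℝ)))) := by
          rw [← Real.exp_nat_mul]
      _ = Real.exp (-1) := by
          congr 1
          field_simp
      _ = 1 / Real.exp 1 := by
          rw [Real.exp_neg]
          ring
  have : (1 - 1 / Real.exp 1) * f Sstar ≤ (1 - (1 - 1 / (k : ℝ)) ^ k) * f Sstar := by
    apply mul_le_mul_of_nonneg_right _ hfs0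
    linarith
  linarith [part2]
end
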